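/- Let K ≥ 2, let p be a probability vector on Fin K with p_i > 0 for all i, and let π be a derangement of Fin K. Define the joint pmfs P_id(i,j) = p_i·[j = i] and P_π(i,j) = p_i·[j = π(i)] on (Fin K) × (Fin K). Then: (a) both joints have first marginal p; (b) the second marginal of P_id is p and the second marginal of P_π is j ↦ p_{π⁻¹(j)}, and these two second marginals have equal Shannon entropy H(p); (c) both joints have mutual information equal to H(p); and yet (d) the codebook agreement satisfies A(P_id) = 1 while A(P_π) = Σ_{i : π(i) = i} p_i = 0. -/
import Mathlib


/-- A probability mass function on a finite type: nonnegative and summing to 1. -/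
def IsPMF {Z : Type*} [Fintype Z] (q : Z → ℝ) : Prop :=
  (∀ z, 0 ≤ q z) ∧ ∑ z, q z = 1

/-- Shannon entropy of a pmf (convention 0·log 0 = 0, automatic in Lean). -/
noncomputable def shannonEntropy {K : ℕ} (p : Fin K → ℝ) : ℝ :=
  -∑ i, p i * Real.log (p i)

/-- Mutual information of a joint pmf on (Fin K) × (Fin K) with respect to its
marginals (convention 0·log 0 = 0, automatic in Lean). -/
noncomputable def mutualInfo {K : ℕ} (P : Fin K × Fin K → ℝ) : ℝ :=
  ∑ i, ∑ j, P (i, j) * Real.log (P (i, j) / ((∑ j', P (i, j')) * (∑ i', P (i', j))))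

/-- The deterministic diagonal joint `P_id(i,j) = p_i·[j = i]`. -/
noncomputable def Pid {K : ℕ} (p : Fin K → ℝ) : Fin K × Fin K → ℝ :=
  fun ij => p ij.1 * (if ij.2 = ij.1 then 1 else 0)

/-- The deterministic permuted joint `P_π(i,j) = p_i·[j = π(i)]`. -/
noncomputable def Pperm {K : ℕ} (p : Fin K → ℝ) (π : Equiv.Perm (Fin K)) :
    Fin K × Fin K → ℝ :=
  fun ij => p ij.1 * (if ij.2 = π ij.1 then 1 else 0)

/-- **Non-uniform marginal extension of the marginal-impossibility result.**
For any positive probability vector `p` on `Fin K` (`K ≥ 2`) and any derangement `π`,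
the joints `P_id` and `P_π` share the first marginal `p`, their second marginals are
`p` and `j ↦ p(π⁻¹ j)` (of equal Shannon entropy `H(p)`), both have mutual
information `H(p)`, yet the codebook agreement is `1` versus
`Σ_{i : π i = i} p_i = 0`. -/
theorem nonuniform_marginal_impossibility (K : ℕ) (hK : 2 ≤ K)
    (p : Fin K → ℝ) (hp : IsPMF p) (hpos : ∀ i, 0 < p i)
    (π : Equiv.Perm (Fin K)) (hder : ∀ i, π i ≠ i) :
    -- (a) both joints have first marginal p
    (∀ i : Fin K, ∑ j, Pid p (i, j) = p i) ∧
    (∀ i : Fin K, ∑ j, Pperm p π (i, j) = p i) ∧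
    -- (b) second marginals: p and j ↦ p (π⁻¹ j), of equal Shannon entropy H(p)
    (∀ j : Fin K, ∑ i, Pid p (i, j) = p j) ∧
    (∀ j : Fin K, ∑ i, Pperm p π (i, j) = p (π.symm j)) ∧
    shannonEntropy (fun j => p (π.symm j)) = shannonEntropy p ∧
    -- (c) both joints have mutual information H(p)
    mutualInfo (Pid p) = shannonEntropy p ∧
    mutualInfo (Pperm p π) = shannonEntropy p ∧
    -- (d) opposite codebook agreement
    (∑ i, Pid p (i, i)) = 1 ∧
    (∑ i, Pperm p π (i, i)) = ∑ i ∈ Finset.univ.filter (fun i => π i = i), p i ∧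
    (∑ i, Pperm p π (i, i)) = 0 := by

  have hne : ∀ i, p i ≠ 0 := fun i => (hpos i).ne'
  have h1 : ∀ i : Fin K, ∑ j, Pid p (i, j) = p i := by
    intro i; simp [Pid]
  have h2 : ∀ i : Fin K, ∑ j, Pperm p π (i, j) = p i := by
    intro i; simp [Pperm]
  have h3 : ∀ j : Fin K, ∑ i, Pid p (i, j) = p j := by
    intro j
    rw [Finset.sum_eq_single j]
    · simp [Pid]
    · intro b _ hb; simp [Pid, Ne.symm hb]
    · simp
  have h4 : ∀ j : Fin K, ∑ i, Pperm p π (i, j) = p (π.symm j) := by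
    intro j
    rw [Finset.sum_eq_single (π.symm j)]
    · simp [Pperm]
    · intro b _ hb
      have : j ≠ π b := by
        intro h; exact hb (by simp [h])
      simp [Pperm, this]
    · simp
  refine ⟨h1, h2, h3, h4, ?_, ?_, ?_, ?_, ?_, ?_⟩
  · unfold shannonEntropy
    congr 1
    exact Equiv.sum_comp π.symm (fun j => p j * Real.log (p j))
  · unfold mutualInfo
    simp only [h1, h3]
    rw [shannonEntropy, ← Finset.sum_neg_distrib]
    refine Finset.sum_congr rfl fun i _ => ?_
    rw [Finset.sum_eq_single i]
    · have : Pid p (i, i) = p i := by simp [Pid]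
      rw [this]
      have : p i / (p i * p i) = (p i)⁻¹ := by
        field_simp
      rw [this, Real.log_inv]; ring
    · intro b _ hb; simp [Pid, hb]
    · simp
  · unfold mutualInfo
    simp only [h2, h4]
    rw [shannonEntropy, ← Finset.sum_neg_distrib]
    refine Finset.sum_congr rfl fun i _ => ?_
    rw [Finset.sum_eq_single (π i)]
    · have e1 : Pperm p π (i, π i) = p i := by simp [Pperm]
      rw [e1, Equiv.symm_apply_apply]
      have : p i / (p i * p i) = (p i)⁻¹ := by field_simp
      rw [this, Real.log_inv]; ring
    · intro b _ hb; simp [Pperm, hb]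
    · simp
  · have : ∀ i : Fin K, Pid p (i, i) = p i := fun i => by simp [Pid]
    simp only [this]; exact hp.2
  · have : ∀ i : Fin K, Pperm p π (i, i) = 0 := fun i => by
      simp [Pperm, Ne.symm (hder i)]
    have h0 : Finset.univ.filter (fun i : Fin K => π i = i) = ∅ := by
      ext i; simp [hder i]
    simp [this, h0]
  · have : ∀ i : Fin K, Pperm p π (i, i) = 0 := fun i => by
      simp [Pperm, Ne.symm (hder i)]
    simp [this]
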